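/- Let V be a countable set and μ : V² → ℝ_{≥0} with Σ_y μ(xy) ≤ 1 for every x. For a finite graph S on a subset of V containing a vertex o, define P(t) = e^{-t·μ(S)} · Π_{e∈E(S)} (e^{t·μ(e)} - 1), where μ(S) is the sum of μ(e) over all edges e incident with a vertex of S. Then for every M > 0, x ≥ 0 and z in the closed disk D(x,M) in ℂ, |P(z)| ≤ e^{2M|V(S)|} · P(x+M). -/

import Mathlib

set_option maxHeartbeats 1000000

lemma abs_exp_sub_one_le' (z : ℂ) :
    ‖Complex.exp z - 1‖ ≤ Real.exp ‖z‖ - 1 := by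
  have hC : HasSum (fun n : ℕ => z ^ n / n.factorial) (Complex.exp z) := by
    rw [Complex.exp_eq_exp_ℂ]; exact NormedSpace.expSeries_div_hasSum_exp z
  have hR : HasSum (fun n : ℕ => ‖z‖ ^ n / n.factorial)
      (Real.exp ‖z‖) := by
    rw [Real.exp_eq_exp_ℝ]; exact NormedSpace.expSeries_div_hasSum_exp _
  have hC' : HasSum (Function.update (fun n : ℕ => z ^ n / n.factorial) 0 0)
      (Complex.exp z - 1) := by
    have := hC.update 0 0
    simpa [neg_add_eq_sub] using this
  have hR' : HasSum (Function.update (fun n : ℕ => ‖z‖ ^ n / n.factorial) 0 0)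
      (Real.exp ‖z‖ - 1) := by
    have := hR.update 0 0
    simpa [neg_add_eq_sub] using this
  have := hC'.norm_le_of_bounded hR' ?_
  · simpa [neg_add_eq_sub] using this
  · intro n
    rcases Nat.eq_zero_or_pos n with h | h
    · subst h; simp
    · rw [Function.update_of_ne (by omega), Function.update_of_ne (by omega)]
      simp [norm_div, norm_pow]

theorem long_range_cluster_prob_bound
    {V : Type*} (w : Sym2 V → ℝ) (hw : ∀ e, 0 ≤ w e)
    (hrow : ∀ x : V, ∃ sx : ℝ, HasSum (fun y : V => w s(x, y)) sx ∧ sx ≤ 1)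
    (o : V) (Vs : Finset V) (ho : o ∈ Vs)
    (ES : Finset (Sym2 V)) (hES : ∀ e ∈ ES, ∀ v ∈ e, v ∈ Vs)
    (μS : ℝ)
    (hμS : HasSum (fun e : {e : Sym2 V // ∃ v ∈ Vs, v ∈ e} => w e) μS)
    (P : ℂ → ℂ)
    (hP : P = fun z : ℂ =>
      Complex.exp (-z * μS) * ∏ e ∈ ES, (Complex.exp (z * w e) - 1)) :
    ∀ M : ℝ, 0 < M → ∀ x : ℝ, 0 ≤ x → ∀ z ∈ Metric.closedBall (x : ℂ) M,
      ‖P z‖ ≤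
        Real.exp (2 * M * Vs.card) *
          (Real.exp (-(x + M) * μS) *
            ∏ e ∈ ES, (Real.exp ((x + M) * w e) - 1)) := by
  classical
  -- choose row sums
  choose s hs hs1 using hrow
  -- μS ≥ 0
  have hμ0 : 0 ≤ μS := hμS.nonneg fun e : {e : Sym2 V // ∃ v ∈ Vs, v ∈ e} => hw e.1
  -- μS ≤ card Vs
  have hμcard : μS ≤ (Vs.card : ℝ) := by
    set g : ↥Vs × V → ℝ := fun p => w s(p.1.1, p.2) with hg
    have hgsum : Summable g := by
      rw [summable_prod_of_nonneg (fun p => hw _)]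
      exact ⟨fun v => (hs v.1).summable, (hasSum_fintype _).summable⟩
    obtain ⟨T, hT⟩ := hgsum
    have hfib : HasSum (fun v : ↥Vs => s v.1) T :=
      hT.prod_fiberwise fun v => hs v.1
    have hTeq : T = ∑ v : ↥Vs, s v.1 := hfib.unique (hasSum_fintype _)
    have hTle : T ≤ (Vs.card : ℝ) := by
      rw [hTeq]
      calc ∑ v : ↥Vs, s v.1 ≤ ∑ _v : ↥Vs, (1 : ℝ) :=
            Finset.sum_le_sum fun v _ => hs1 v.1
        _ = (Vs.card : ℝ) := by simp
    refine le_trans ?_ hTle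
    have hinj : Function.Injective
        (fun e : {e : Sym2 V // ∃ v ∈ Vs, v ∈ e} =>
          ((⟨e.2.choose, e.2.choose_spec.1⟩ : ↥Vs),
            Sym2.Mem.other e.2.choose_spec.2)) := by
      intro a b hab
      simp only [Prod.mk.injEq, Subtype.mk.injEq] at hab
      apply Subtype.ext
      have ha := Sym2.other_spec a.2.choose_spec.2
      have hb := Sym2.other_spec b.2.choose_spec.2
      rw [← ha, ← hb]
      exact congrArg₂ (fun u v : V => s(u, v)) hab.1 hab.2
    have := Summable.tsum_le_tsum_of_inj _ hinj (fun c _ => hw _)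
      (fun e => le_of_eq (by
        show w e.1 = g _
        simp only [hg]
        rw [Sym2.other_spec e.2.choose_spec.2])) hμS.summable ⟨T, hT⟩
    rwa [hμS.tsum_eq, hT.tsum_eq] at this
  intro M hM x hx z hz
  rw [Metric.mem_closedBall, Complex.dist_eq] at hz
  -- bounds on z
  have habs : ‖z‖ ≤ x + M := by
    calc ‖z‖ = ‖(x : ℂ) + (z - x)‖ := by ring_nf
      _ ≤ ‖(x : ℂ)‖ + ‖z - x‖ := norm_add_le _ _
      _ ≤ x + M := by
          rw [Complex.norm_real, Real.norm_of_nonneg hx]; linarith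
  have hre : x - M ≤ z.re := by
    have := Complex.abs_re_le_norm (z - x)
    simp only [Complex.sub_re, Complex.ofReal_re] at this
    have := abs_le.1 (this.trans hz)
    linarith [this.1]
  rw [hP]
  simp only [norm_mul, norm_prod]
  have h1 : ‖Complex.exp (-z * μS)‖ =
      Real.exp (-z.re * μS) := by
    rw [Complex.norm_exp]
    congr 1
    simp [Complex.mul_re]
  have h2 : Real.exp (-z.re * μS) ≤
      Real.exp (2 * M * Vs.card) * Real.exp (-(x + M) * μS) := by
    rw [← Real.exp_add, Real.exp_le_exp]
    nlinarith
  have h3 : ∏ e ∈ ES, ‖Complex.exp (z * w e) - 1‖ ≤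
      ∏ e ∈ ES, (Real.exp ((x + M) * w e) - 1) := by
    apply Finset.prod_le_prod (fun e _ => norm_nonneg _)
    intro e _
    calc ‖Complex.exp (z * w e) - 1‖
        ≤ Real.exp ‖z * w e‖ - 1 := abs_exp_sub_one_le' _
      _ ≤ Real.exp ((x + M) * w e) - 1 := by
          gcongr
          rw [norm_mul, Complex.norm_real, Real.norm_of_nonneg (hw e)]
          exact mul_le_mul_of_nonneg_right habs (hw e)
  rw [h1]
  have hprodnn : (0:ℝ) ≤ ∏ e ∈ ES, ‖Complex.exp (z * w e) - 1‖ :=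
    Finset.prod_nonneg fun e _ => norm_nonneg _
  calc Real.exp (-z.re * μS) * ∏ e ∈ ES, ‖Complex.exp (z * w e) - 1‖
      ≤ (Real.exp (2 * M * Vs.card) * Real.exp (-(x + M) * μS)) *
        ∏ e ∈ ES, (Real.exp ((x + M) * w e) - 1) := by
        apply mul_le_mul h2 h3 hprodnn
        positivity
    _ = Real.exp (2 * M * Vs.card) *
        (Real.exp (-(x + M) * μS) * ∏ e ∈ ES, (Real.exp ((x + M) * w e) - 1)) :=
        mul_assoc _ _ _
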